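/- For every α > 0 and every finitely supported sequence x : ℕ₊ → ℂ, the sequence u = K_α x (given pointwise by u(n) = ∑_{m=1}^∞ k_α(n,m) x(m), an absolutely convergent series) satisfies a_α(n−1)u(n−1) + b_α(n)u(n) + a_α(n)u(n+1) = x(n) for every n ≥ 2, and b_α(1)u(1) + a_α(1)u(2) = x(1). In other words, J_α K_α x = x for all finitely supported x. -/

import Mathlib

open scoped BigOperators

/-- The Hardy kernel `k_α(n,m) = (nm)^(-1/2+α) / max(n,m)^(2α)` on the positive integers. -/
noncomputable def kmat (α : ℝ) (n m : ℕ+) : ℝ :=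
  ((n : ℝ) * (m : ℝ)) ^ (-(1/2 : ℝ) + α) / (max (n : ℝ) (m : ℝ)) ^ (2 * α)

/-- Off-diagonal Jacobi parameter `a_α`. -/
noncomputable def aJ (α x : ℝ) : ℝ :=
  (x ^ (α + 1/2) * (x + 1) ^ (α + 1/2)) / (x ^ (2 * α) - (x + 1) ^ (2 * α))

/-- Diagonal Jacobi parameter `b_α`. -/
noncomputable def bJ (α x : ℝ) : ℝ :=
  (x ^ (2 * α + 1) * ((x + 1) ^ (2 * α) - (x - 1) ^ (2 * α))) /
    (((x + 1) ^ (2 * α) - x ^ (2 * α)) * (x ^ (2 * α) - (x - 1) ^ (2 * α)))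

section cores

variable (α : ℝ)

lemma core_lt (hα : 0 < α) (c y : ℝ) (hc : 2 ≤ c) :
    aJ α (c-1) * ((c-1) ^ (α - 1/2) * y ^ (α - 1/2) / (c-1) ^ (2*α))
      + bJ α c * (c ^ (α - 1/2) * y ^ (α - 1/2) / c ^ (2*α))
      + aJ α c * ((c+1) ^ (α - 1/2) * y ^ (α - 1/2) / (c+1) ^ (2*α)) = 0 := by
  have h1 : (0:ℝ) < c - 1 := by linarith
  have h0 : (0:ℝ) < c := by linarith
  have h2 : (0:ℝ) < c + 1 := by linarith
  have e1 : (c-1) ^ (2*α) = (c-1) ^ (α+1/2) * (c-1) ^ (α-1/2) := by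
    rw [← Real.rpow_add h1]; ring_nf
  have e0 : c ^ (2*α) = c ^ (α+1/2) * c ^ (α-1/2) := by
    rw [← Real.rpow_add h0]; ring_nf
  have e2 : (c+1) ^ (2*α) = (c+1) ^ (α+1/2) * (c+1) ^ (α-1/2) := by
    rw [← Real.rpow_add h2]; ring_nf
  have e4 : c ^ (α+1/2) = c * c ^ (α-1/2) := by
    rw [show α + 1/2 = 1 + (α-1/2) by ring, Real.rpow_add h0, Real.rpow_one]
  have e5 : c ^ (2*α+1) = c ^ (2*α) * c := by
    rw [Real.rpow_add h0, Real.rpow_one]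
  have l1 : (c-1) ^ (2*α) < c ^ (2*α) :=
    Real.rpow_lt_rpow h1.le (by linarith) (by linarith)
  have l2 : c ^ (2*α) < (c+1) ^ (2*α) :=
    Real.rpow_lt_rpow h0.le (by linarith) (by linarith)
  have d1 : (c-1) ^ (2*α) - c ^ (2*α) ≠ 0 := by intro hh; nlinarith
  have d2 : c ^ (2*α) - (c+1) ^ (2*α) ≠ 0 := by intro hh; nlinarith
  have d3 : (c+1) ^ (2*α) - c ^ (2*α) ≠ 0 := by intro hh; nlinarith
  have d4 : c ^ (2*α) - (c-1) ^ (2*α) ≠ 0 := by intro hh; nlinarith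
  have p1 : (c-1) ^ (2*α) ≠ 0 := (Real.rpow_pos_of_pos h1 _).ne'
  have p0 : c ^ (2*α) ≠ 0 := (Real.rpow_pos_of_pos h0 _).ne'
  have p2 : (c+1) ^ (2*α) ≠ 0 := (Real.rpow_pos_of_pos h2 _).ne'
  simp only [aJ, bJ, show c - 1 + 1 = c by ring]
  rw [e5]
  simp only [e1, e0, e2, e4] at d1 d2 d3 d4 p1 p0 p2 ⊢
  clear e1 e0 e2 e4 e5 l1 l2 hc hα h1 h0 h2
  generalize (c-1) ^ (α+1/2) = Q1 at *
  generalize (c-1) ^ (α-1/2) = R1 at *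
  generalize c ^ (α-1/2) = Rn at *
  generalize (c+1) ^ (α+1/2) = Q2 at *
  generalize (c+1) ^ (α-1/2) = R2 at *
  generalize y ^ (α-1/2) = Ry at *
  obtain ⟨hQ1, hR1⟩ := mul_ne_zero_iff.mp p1
  obtain ⟨hQ2, hR2⟩ := mul_ne_zero_iff.mp p2
  obtain ⟨hcRn, hRn⟩ := mul_ne_zero_iff.mp p0
  rw [show c * Rn * Rn = c * Rn ^ 2 by ring] at d1 d2 d3 d4
  field_simp
  ring

lemma core_gt (hα : 0 < α) (c y : ℝ) (hc : 2 ≤ c) (hy : 0 < y) :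
    aJ α (c-1) * ((c-1) ^ (α - 1/2) * y ^ (α - 1/2) / y ^ (2*α))
      + bJ α c * (c ^ (α - 1/2) * y ^ (α - 1/2) / y ^ (2*α))
      + aJ α c * ((c+1) ^ (α - 1/2) * y ^ (α - 1/2) / y ^ (2*α)) = 0 := by
  have h1 : (0:ℝ) < c - 1 := by linarith
  have h0 : (0:ℝ) < c := by linarith
  have h2 : (0:ℝ) < c + 1 := by linarith
  have e1 : (c-1) ^ (2*α) = (c-1) ^ (α+1/2) * (c-1) ^ (α-1/2) := by
    rw [← Real.rpow_add h1]; ring_nf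
  have e0 : c ^ (2*α) = c ^ (α+1/2) * c ^ (α-1/2) := by
    rw [← Real.rpow_add h0]; ring_nf
  have e2 : (c+1) ^ (2*α) = (c+1) ^ (α+1/2) * (c+1) ^ (α-1/2) := by
    rw [← Real.rpow_add h2]; ring_nf
  have e4 : c ^ (α+1/2) = c * c ^ (α-1/2) := by
    rw [show α + 1/2 = 1 + (α-1/2) by ring, Real.rpow_add h0, Real.rpow_one]
  have e5 : c ^ (2*α+1) = c ^ (2*α) * c := by
    rw [Real.rpow_add h0, Real.rpow_one]
  have l1 : (c-1) ^ (2*α) < c ^ (2*α) :=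
    Real.rpow_lt_rpow h1.le (by linarith) (by linarith)
  have l2 : c ^ (2*α) < (c+1) ^ (2*α) :=
    Real.rpow_lt_rpow h0.le (by linarith) (by linarith)
  have d1 : (c-1) ^ (2*α) - c ^ (2*α) ≠ 0 := by intro hh; nlinarith
  have d2 : c ^ (2*α) - (c+1) ^ (2*α) ≠ 0 := by intro hh; nlinarith
  have d3 : (c+1) ^ (2*α) - c ^ (2*α) ≠ 0 := by intro hh; nlinarith
  have d4 : c ^ (2*α) - (c-1) ^ (2*α) ≠ 0 := by intro hh; nlinarith
  have py : y ^ (2*α) ≠ 0 := (Real.rpow_pos_of_pos hy _).ne'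
  simp only [aJ, bJ, show c - 1 + 1 = c by ring]
  rw [e5]
  simp only [e1, e0, e2, e4] at d1 d2 d3 d4 ⊢
  clear e1 e0 e2 e4 e5 l1 l2 hc hα h1 h0 h2 hy
  generalize (c-1) ^ (α+1/2) = Q1 at *
  generalize (c-1) ^ (α-1/2) = R1 at *
  generalize c ^ (α-1/2) = Rn at *
  generalize (c+1) ^ (α+1/2) = Q2 at *
  generalize (c+1) ^ (α-1/2) = R2 at *
  generalize y ^ (α-1/2) = Ry at *
  generalize y ^ (2*α) = Py at *
  rw [show c * Rn * Rn = c * Rn ^ 2 by ring] at d1 d2 d3 d4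
  field_simp
  ring

lemma core_eq (hα : 0 < α) (c : ℝ) (hc : 2 ≤ c) :
    aJ α (c-1) * ((c-1) ^ (α - 1/2) * c ^ (α - 1/2) / c ^ (2*α))
      + bJ α c * (c ^ (α - 1/2) * c ^ (α - 1/2) / c ^ (2*α))
      + aJ α c * ((c+1) ^ (α - 1/2) * c ^ (α - 1/2) / (c+1) ^ (2*α)) = 1 := by
  have h1 : (0:ℝ) < c - 1 := by linarith
  have h0 : (0:ℝ) < c := by linarith
  have h2 : (0:ℝ) < c + 1 := by linarith
  have e1 : (c-1) ^ (2*α) = (c-1) ^ (α+1/2) * (c-1) ^ (α-1/2) := by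
    rw [← Real.rpow_add h1]; ring_nf
  have e0 : c ^ (2*α) = c ^ (α+1/2) * c ^ (α-1/2) := by
    rw [← Real.rpow_add h0]; ring_nf
  have e2 : (c+1) ^ (2*α) = (c+1) ^ (α+1/2) * (c+1) ^ (α-1/2) := by
    rw [← Real.rpow_add h2]; ring_nf
  have e4 : c ^ (α+1/2) = c * c ^ (α-1/2) := by
    rw [show α + 1/2 = 1 + (α-1/2) by ring, Real.rpow_add h0, Real.rpow_one]
  have e5 : c ^ (2*α+1) = c ^ (2*α) * c := by
    rw [Real.rpow_add h0, Real.rpow_one]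
  have l1 : (c-1) ^ (2*α) < c ^ (2*α) :=
    Real.rpow_lt_rpow h1.le (by linarith) (by linarith)
  have l2 : c ^ (2*α) < (c+1) ^ (2*α) :=
    Real.rpow_lt_rpow h0.le (by linarith) (by linarith)
  have d1 : (c-1) ^ (2*α) - c ^ (2*α) ≠ 0 := by intro hh; nlinarith
  have d2 : c ^ (2*α) - (c+1) ^ (2*α) ≠ 0 := by intro hh; nlinarith
  have d3 : (c+1) ^ (2*α) - c ^ (2*α) ≠ 0 := by intro hh; nlinarith
  have d4 : c ^ (2*α) - (c-1) ^ (2*α) ≠ 0 := by intro hh; nlinarith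
  have p1 : (c-1) ^ (2*α) ≠ 0 := (Real.rpow_pos_of_pos h1 _).ne'
  have p0 : c ^ (2*α) ≠ 0 := (Real.rpow_pos_of_pos h0 _).ne'
  have p2 : (c+1) ^ (2*α) ≠ 0 := (Real.rpow_pos_of_pos h2 _).ne'
  simp only [aJ, bJ, show c - 1 + 1 = c by ring]
  rw [e5]
  simp only [e1, e0, e2, e4] at d1 d2 d3 d4 p1 p0 p2 ⊢
  clear e1 e0 e2 e4 e5 l1 l2 hc hα h1 h0 h2
  generalize (c-1) ^ (α+1/2) = Q1 at *
  generalize (c-1) ^ (α-1/2) = R1 at *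
  generalize c ^ (α-1/2) = Rn at *
  generalize (c+1) ^ (α+1/2) = Q2 at *
  generalize (c+1) ^ (α-1/2) = R2 at *
  obtain ⟨hQ1, hR1⟩ := mul_ne_zero_iff.mp p1
  obtain ⟨hQ2, hR2⟩ := mul_ne_zero_iff.mp p2
  obtain ⟨hcRn, hRn⟩ := mul_ne_zero_iff.mp p0
  obtain ⟨hc0, -⟩ := mul_ne_zero_iff.mp hcRn
  rw [show c * Rn * Rn = c * Rn ^ 2 by ring] at d1 d2 d3 d4
  field_simp
  ring

lemma bnd_core (hα : 0 < α) :
    bJ α 1 = 2 ^ (2*α) / (2 ^ (2*α) - 1) ∧ aJ α 1 = 2 ^ (α+1/2) / (1 - 2 ^ (2*α)) := by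
  have h2 : ((1:ℝ) - 1) = 0 := by norm_num
  have h3 : ((1:ℝ) + 1) = 2 := by norm_num
  constructor
  · rw [bJ, h2, h3, Real.one_rpow, Real.one_rpow,
      Real.zero_rpow (by positivity : 2*α ≠ 0)]
    ring
  · rw [aJ, h3, Real.one_rpow, Real.one_rpow]
    ring

lemma bnd_ne (hα : 0 < α) : (2:ℝ) ^ (2*α) - 1 ≠ 0 := by
  have : (1:ℝ) < 2 ^ (2*α) := by
    rw [show (1:ℝ) = 2 ^ (0:ℝ) by simp]
    exact Real.rpow_lt_rpow_left_iff (by norm_num) |>.mpr (by linarith)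
  intro hh; nlinarith

lemma e2two (α : ℝ) : (2:ℝ) ^ (2*α) = 2 ^ (α+1/2) * 2 ^ (α-1/2) := by
  rw [← Real.rpow_add (by norm_num : (0:ℝ) < 2)]; ring_nf

lemma bnd_eq (hα : 0 < α) :
    bJ α 1 + aJ α 1 * (2 ^ (α - 1/2) / 2 ^ (2*α)) = 1 := by
  obtain ⟨hb, ha⟩ := bnd_core α hα
  have hd := bnd_ne α hα
  have hd2 : (1:ℝ) - 2 ^ (2*α) ≠ 0 := fun hh => bnd_ne α hα (by linarith)
  have p2 : (2:ℝ) ^ (2*α) ≠ 0 := (Real.rpow_pos_of_pos (by norm_num) _).ne'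
  rw [hb, ha, e2two] at *
  generalize (2:ℝ) ^ (α+1/2) = Q at *
  generalize (2:ℝ) ^ (α-1/2) = R at *
  obtain ⟨hQ, hR⟩ := mul_ne_zero_iff.mp p2
  field_simp [hd, hd2, p2]
  ring

lemma bnd_gt (hα : 0 < α) (y : ℝ) (hy : 0 < y) :
    bJ α 1 * (1 ^ (α - 1/2) * y ^ (α - 1/2) / y ^ (2*α))
      + aJ α 1 * (2 ^ (α - 1/2) * y ^ (α - 1/2) / y ^ (2*α)) = 0 := by
  obtain ⟨hb, ha⟩ := bnd_core α hα
  have hd := bnd_ne α hα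
  have hd2 : (1:ℝ) - 2 ^ (2*α) ≠ 0 := fun hh => bnd_ne α hα (by linarith)
  have py : y ^ (2*α) ≠ 0 := (Real.rpow_pos_of_pos hy _).ne'
  rw [hb, ha, e2two, Real.one_rpow] at *
  generalize (2:ℝ) ^ (α+1/2) = Q at *
  generalize (2:ℝ) ^ (α-1/2) = R at *
  generalize y ^ (α-1/2) = Ry at *
  generalize y ^ (2*α) = Py at *
  field_simp [hd, hd2, py]
  ring

end cores

lemma pnat_sub_one_coe (n : ℕ+) (h : 2 ≤ n) : ((n-1 : ℕ+):ℝ) = (n:ℝ) - 1 := by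
  have h1 : (1:ℕ+) < n := h
  have h2 : (1:ℕ) ≤ (n:ℕ) := n.pos
  simp only [PNat.sub_coe, if_pos h1, PNat.one_coe]
  rw [Nat.cast_sub h2, Nat.cast_one]

lemma row (α : ℝ) (hα : 0 < α) (n m : ℕ+) (hn : 2 ≤ n) :
    aJ α ((n:ℝ)-1) * kmat α (n-1) m + bJ α (n:ℝ) * kmat α n m
      + aJ α (n:ℝ) * kmat α (n+1) m = if m = n then 1 else 0 := by
  have hplus : ((n+1 : ℕ+):ℝ) = (n:ℝ) + 1 := by push_cast; ring
  have hcr : (2:ℝ) ≤ (n:ℝ) := by exact_mod_cast hn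
  have hyr : (0:ℝ) < (m:ℝ) := by exact_mod_cast m.pos
  simp only [kmat, pnat_sub_one_coe n hn, hplus,
    show -(1/2:ℝ) + α = α - 1/2 by ring,
    Real.mul_rpow (by linarith : (0:ℝ) ≤ (n:ℝ)-1) hyr.le,
    Real.mul_rpow (by linarith : (0:ℝ) ≤ (n:ℝ)) hyr.le,
    Real.mul_rpow (by linarith : (0:ℝ) ≤ (n:ℝ)+1) hyr.le]
  rcases lt_trichotomy m n with h | h | h
  · have hym : (m:ℝ) ≤ (n:ℝ) - 1 := by
      have : (m:ℕ) + 1 ≤ (n:ℕ) := by exact_mod_cast h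
      have : ((m:ℕ):ℝ) + 1 ≤ ((n:ℕ):ℝ) := by exact_mod_cast this
      linarith
    rw [max_eq_left hym, max_eq_left (by linarith), max_eq_left (by linarith),
      if_neg (ne_of_lt h)]
    exact core_lt α hα (n:ℝ) (m:ℝ) hcr
  · subst h
    rw [max_eq_right (by linarith), max_eq_left le_rfl, max_eq_left (by linarith),
      if_pos rfl]
    exact core_eq α hα (m:ℝ) hcr
  · have hym : (n:ℝ) + 1 ≤ (m:ℝ) := by
      have : (n:ℕ) + 1 ≤ (m:ℕ) := by exact_mod_cast h
      have : ((n:ℕ):ℝ) + 1 ≤ ((m:ℕ):ℝ) := by exact_mod_cast this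
      linarith
    rw [max_eq_right (by linarith), max_eq_right (by linarith), max_eq_right hym,
      if_neg (by intro hh; subst hh; exact lt_irrefl _ h)]
    exact core_gt α hα (n:ℝ) (m:ℝ) hcr hyr

lemma row1 (α : ℝ) (hα : 0 < α) (m : ℕ+) :
    bJ α 1 * kmat α 1 m + aJ α 1 * kmat α 2 m = if m = 1 then 1 else 0 := by
  have h1 : ((1:ℕ+):ℝ) = 1 := by norm_cast
  have h2 : ((2:ℕ+):ℝ) = 2 := by norm_cast
  have hyr : (0:ℝ) < (m:ℝ) := by exact_mod_cast m.pos
  simp only [kmat, h1, h2, show -(1/2:ℝ) + α = α - 1/2 by ring,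
    Real.mul_rpow (by norm_num : (0:ℝ) ≤ 1) hyr.le,
    Real.mul_rpow (by norm_num : (0:ℝ) ≤ 2) hyr.le]
  rcases eq_or_lt_of_le m.one_le with h | h
  · rw [if_pos h.symm, ← h]
    have h1' : ((1:ℕ+):ℝ) = 1 := h1
    rw [h1']
    simp only [max_self, Real.one_rpow, max_eq_left (by norm_num : (1:ℝ) ≤ 2)]
    linear_combination bnd_eq α hα
  · have hm2 : (2:ℝ) ≤ (m:ℝ) := by
      have : (2:ℕ+) ≤ m := h
      exact_mod_cast this
    rw [max_eq_right (by linarith), max_eq_right hm2,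
      if_neg (by intro hh; subst hh; exact lt_irrefl _ h)]
    exact bnd_gt α hα (m:ℝ) hyr

theorem jacobi_inverts_kernel (α : ℝ) (hα : 0 < α) (x : ℕ+ → ℂ)
    (hx : (Function.support x).Finite) (u : ℕ+ → ℂ)
    (hu : ∀ n : ℕ+, u n = ∑' m : ℕ+, (kmat α n m : ℂ) * x m) :
    (∀ n : ℕ+, 2 ≤ n →
      (aJ α ((n : ℝ) - 1) : ℂ) * u (n - 1) + (bJ α (n : ℝ) : ℂ) * u n
          + (aJ α (n : ℝ) : ℂ) * u (n + 1) = x n) ∧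
    (bJ α 1 : ℂ) * u 1 + (aJ α 1 : ℂ) * u 2 = x 1 := by
  classical
  have hsum : ∀ n : ℕ+, u n = ∑ m ∈ hx.toFinset, (kmat α n m : ℂ) * x m := by
    intro n
    rw [hu n]
    refine tsum_eq_sum ?_
    intro b hb
    have hb0 : x b = 0 := by
      by_contra h
      exact hb (hx.mem_toFinset.mpr h)
    rw [hb0, mul_zero]
  have key : ∀ (n : ℕ+) (c1 c2 c3 : ℝ) (k1 k2 k3 : ℕ+ → ℝ),
      (∀ m : ℕ+, c1 * k1 m + c2 * k2 m + c3 * k3 m = if m = n then 1 else 0) →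
      (c1:ℂ) * (∑ m ∈ hx.toFinset, (k1 m : ℂ) * x m)
        + (c2:ℂ) * (∑ m ∈ hx.toFinset, (k2 m : ℂ) * x m)
        + (c3:ℂ) * (∑ m ∈ hx.toFinset, (k3 m : ℂ) * x m) = x n := by
    intro n c1 c2 c3 k1 k2 k3 hrow
    rw [Finset.mul_sum, Finset.mul_sum, Finset.mul_sum,
      ← Finset.sum_add_distrib, ← Finset.sum_add_distrib]
    have hcongr : ∀ m ∈ hx.toFinset,
        (c1:ℂ) * ((k1 m : ℂ) * x m) + (c2:ℂ) * ((k2 m : ℂ) * x m)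
          + (c3:ℂ) * ((k3 m : ℂ) * x m) = if m = n then x m else 0 := by
      intro m _
      have hc : ((c1 * k1 m + c2 * k2 m + c3 * k3 m : ℝ) : ℂ)
          = ((if m = n then (1:ℝ) else 0 : ℝ) : ℂ) := by rw [hrow m]
      rw [apply_ite ((↑·) : ℝ → ℂ)] at hc
      push_cast at hc
      calc (c1:ℂ) * ((k1 m : ℂ) * x m) + (c2:ℂ) * ((k2 m : ℂ) * x m)
            + (c3:ℂ) * ((k3 m : ℂ) * x m)
          = ((c1:ℂ) * (k1 m : ℂ) + (c2:ℂ) * (k2 m : ℂ) + (c3:ℂ) * (k3 m : ℂ)) * x m := by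
            ring
        _ = (if m = n then (1:ℂ) else 0) * x m := by rw [hc]
        _ = if m = n then x m else 0 := by split <;> simp
    rw [Finset.sum_congr rfl hcongr, Finset.sum_ite_eq' hx.toFinset n x]
    by_cases hns : n ∈ hx.toFinset
    · rw [if_pos hns]
    · have hxn : x n = 0 := by
        by_contra h
        exact hns (hx.mem_toFinset.mpr h)
      rw [if_neg hns, hxn]
  constructor
  · intro n hn
    rw [hsum (n-1), hsum n, hsum (n+1)]
    exact key n _ _ _ _ _ _ (fun m => row α hα n m hn)
  · rw [hsum 1, hsum 2]
    have h0 : (bJ α 1 : ℂ) * (∑ m ∈ hx.toFinset, (kmat α 1 m : ℂ) * x m)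
        + (aJ α 1 : ℂ) * (∑ m ∈ hx.toFinset, (kmat α 2 m : ℂ) * x m)
        + ((0:ℝ):ℂ) * (∑ m ∈ hx.toFinset, (kmat α 2 m : ℂ) * x m) = x 1 := by
      refine key 1 _ _ _ _ _ _ (fun m => ?_)
      rw [zero_mul, add_zero]
      exact row1 α hα m
    push_cast at h0
    rw [zero_mul, add_zero] at h0
    exact h0
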